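/- Let s₁,…,s_K > 0, set S₀ = 0 and S_k = s₁ + ⋯ + s_k for k = 1,…,K. Let S̄ : [0,K] → ℝ be the greatest convex minorant of the data points, i.e. the pointwise-largest convex function g on [0,K] satisfying g(k) ≤ S_k for every integer k = 0,…,K. Then S̄(k) − S̄(k−1) > 0 for every k, and the vector μ̂ defined by μ̂_k = −1/(S̄(k) − S̄(k−1)) minimizes ∑_{k=1}^K (−log(−μ_k) − μ_k s_k) subject to μ₁ ≤ μ₂ ≤ ⋯ ≤ μ_K < 0. -/

import Mathlib

lemma stmt3_affine_convexOn (t : Set ℝ) (ht : Convex ℝ t) (a b : ℝ) :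
    ConvexOn ℝ t (fun x => a * x + b) := by
  refine ⟨ht, fun x _ y _ p q hp hq hpq => ?_⟩
  simp only [smul_eq_mul]
  apply le_of_eq
  have hq1 : q = 1 - p := by linarith
  subst hq1; ring

lemma stmt3_key (K : ℕ) (S : ℕ → ℝ) (Sbar : ℝ → ℝ)
    (hconv : ConvexOn ℝ (Set.Icc (0 : ℝ) (K : ℝ)) Sbar)
    (hbelow : ∀ k : ℕ, k ≤ K → Sbar (k : ℝ) ≤ S k)
    (hgreatest : ∀ g : ℝ → ℝ, ConvexOn ℝ (Set.Icc (0 : ℝ) (K : ℝ)) g →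
      (∀ k : ℕ, k ≤ K → g (k : ℝ) ≤ S k) → ∀ x ∈ Set.Icc (0 : ℝ) (K : ℝ), g x ≤ Sbar x)
    (j : ℕ) (hj1 : 1 ≤ j) (hjK : j < K) (hlt : Sbar (j : ℝ) < S j) :
    Sbar ((j : ℝ) + 1) - Sbar (j : ℝ) = Sbar (j : ℝ) - Sbar ((j : ℝ) - 1) := by
  set J : ℝ := (j : ℝ) with hJ
  have hj1R : (1 : ℝ) ≤ J := by rw [hJ]; exact_mod_cast hj1
  have hjKR : J + 1 ≤ (K : ℝ) := by
    have : (j : ℝ) + 1 ≤ (K : ℝ) := by exact_mod_cast Nat.succ_le_of_lt hjK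
    simpa [hJ]
  have memm : J - 1 ∈ Set.Icc (0 : ℝ) (K : ℝ) := ⟨by linarith, by linarith⟩
  have memp : J + 1 ∈ Set.Icc (0 : ℝ) (K : ℝ) := ⟨by linarith, by linarith⟩
  have memj : J ∈ Set.Icc (0 : ℝ) (K : ℝ) := ⟨by linarith, by linarith⟩
  set A : ℝ := Sbar (J - 1) with hA
  set B : ℝ := Sbar (J + 1) with hB
  set bl : ℝ := (B - A) / 2 with hbl
  set bb : ℝ := A - bl * (J - 1) with hbb
  -- midpoint inequality from convexity
  have hmid : Sbar J - A ≤ B - Sbar J := by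
    have h := hconv.slope_mono_adjacent memm memp
      (show J - 1 < J by linarith) (show J < J + 1 by linarith)
    rw [show J - (J - 1) = 1 by ring, show J + 1 - J = 1 by ring, div_one, div_one] at h
    linarith
  -- line below Sbar at other integer points
  have L_le : ∀ n : ℕ, n ≤ K → n ≠ j → bl * (n : ℝ) + bb ≤ Sbar (n : ℝ) := by
    intro n hnK hnj
    have memn : (n : ℝ) ∈ Set.Icc (0 : ℝ) (K : ℝ) :=
      ⟨Nat.cast_nonneg n, Nat.cast_le.mpr hnK⟩
    rcases lt_trichotomy n j with hn | hn | hn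
    · rcases eq_or_lt_of_le (Nat.le_sub_one_of_lt hn) with he | hl
      · have : (n : ℝ) = J - 1 := by
          rw [hJ]; have : n = j - 1 := he
          rw [this]; push_cast [Nat.cast_sub hj1]; ring
        rw [this, hbb]; apply le_of_eq; rw [hA]; ring
      · have hnlt : (n : ℝ) < J - 1 := by
          have : (n : ℝ) + 1 < J := by
            rw [hJ]
            have : n + 1 < j := by omega
            exact_mod_cast this
          linarith
        have h := hconv.slope_mono_adjacent memn memp hnlt (show J - 1 < J + 1 by linarith)
        rw [show J + 1 - (J - 1) = 2 by ring] at h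
        rw [← hA, ← hB, ← hbl] at h
        have hdpos : (0 : ℝ) < J - 1 - n := by linarith
        rw [div_le_iff₀ hdpos] at h
        rw [hbb]; nlinarith
    · exact absurd hn hnj
    · rcases eq_or_lt_of_le (Nat.succ_le_of_lt hn) with he | hl
      · have : (n : ℝ) = J + 1 := by
          rw [hJ]; exact_mod_cast congrArg (Nat.cast : ℕ → ℝ) he.symm
        rw [this]; apply le_of_eq; simp only [hbb, hbl, hA, hB]; ring
      · have hngt : J + 1 < (n : ℝ) := by
          rw [hJ]
          have : j + 1 < n := hl
          exact_mod_cast this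
        have h := hconv.slope_mono_adjacent memm memn
          (show J - 1 < J + 1 by linarith) hngt
        rw [show J + 1 - (J - 1) = 2 by ring] at h
        rw [← hA, ← hB, ← hbl] at h
        have hdpos : (0 : ℝ) < (n : ℝ) - (J + 1) := by linarith
        rw [le_div_iff₀ hdpos] at h
        rw [hbb]; nlinarith
  set c : ℝ := max 0 ((bl * J + bb) - S j) with hc
  have hc0 : 0 ≤ c := le_max_left _ _
  have hcS : (bl * J + bb) - S j ≤ c := le_max_right _ _
  set g : ℝ → ℝ := Sbar ⊔ (fun x => bl * x + (bb - c)) with hg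
  have hgconv : ConvexOn ℝ (Set.Icc (0 : ℝ) (K : ℝ)) g :=
    hconv.sup (stmt3_affine_convexOn _ (convex_Icc _ _) bl (bb - c))
  have hgbelow : ∀ n : ℕ, n ≤ K → g (n : ℝ) ≤ S n := by
    intro n hn
    rw [hg]
    by_cases hnj : n = j
    · subst hnj
      exact sup_le (hbelow n hn) (by simp only; linarith)
    · exact sup_le (hbelow n hn)
        (by simp only; linarith [L_le n hn hnj, hbelow n hn])
  have hgj := hgreatest g hgconv hgbelow J memj
  have hLc : bl * J + (bb - c) ≤ Sbar J := le_trans (le_sup_right) hgj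
  have hLj : bl * J + bb ≤ Sbar J := by
    rcases le_or_gt ((bl * J + bb) - S j) 0 with h | h
    · have : c = 0 := max_eq_left h
      rw [this] at hLc; linarith
    · have : c = (bl * J + bb) - S j := max_eq_right (le_of_lt h)
      rw [this] at hLc; linarith
  have : A + B ≤ 2 * Sbar J := by
    rw [hbb, hbl] at hLj; nlinarith
  linarith


lemma stmt3_aux (K : ℕ) (hK : 1 ≤ K) (s δ μ D : ℕ → ℝ)
    (hδpos : ∀ k, 1 ≤ k → k ≤ K → 0 < δ k)
    (hd : ∀ k, 1 ≤ k → k ≤ K → δ k - s k = D k - D (k - 1))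
    (hD0 : D 0 = 0) (hDK : D K = 0) (hDle : ∀ k, 1 ≤ k → k ≤ K → D k ≤ 0)
    (hkey : ∀ k, 1 ≤ k → k < K → D k < 0 → δ (k + 1) = δ k)
    (hμmono : ∀ k, 1 ≤ k → k < K → μ k ≤ μ (k + 1))
    (hμneg : ∀ k, 1 ≤ k → k ≤ K → μ k < 0) :
    ∑ k ∈ Finset.Icc 1 K, (-Real.log (-(-(1 / δ k))) - (-(1 / δ k)) * s k)
      ≤ ∑ k ∈ Finset.Icc 1 K, (-Real.log (-μ k) - μ k * s k) := by
  have perterm : ∀ k ∈ Finset.Icc 1 K,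
      (-Real.log (-(-(1 / δ k))) - (-(1 / δ k)) * s k)
        + (D k - D (k - 1)) * (μ k + 1 / δ k)
      ≤ -Real.log (-μ k) - μ k * s k := by
    intro k hk
    rw [Finset.mem_Icc] at hk
    rw [← hd k hk.1 hk.2]
    have hdp : 0 < δ k := hδpos k hk.1 hk.2
    have hx : μ k < 0 := hμneg k hk.1 hk.2
    have h1 : Real.log (-μ k) - Real.log (1 / δ k) ≤ -μ k * δ k - 1 := by
      have hpos : 0 < -μ k * δ k := mul_pos (by linarith) hdp
      have h2 := Real.log_le_sub_one_of_pos hpos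
      rw [Real.log_mul (by linarith) (by linarith)] at h2
      have h3 : Real.log (1 / δ k) = -Real.log (δ k) := by
        rw [one_div, Real.log_inv]
      linarith
    have hexp : (-Real.log (-(-(1 / δ k))) - (-(1 / δ k)) * s k)
        + (δ k - s k) * (μ k + 1 / δ k)
        = -Real.log (1 / δ k) + δ k * μ k + 1 - s k * μ k := by
      rw [neg_neg]
      field_simp
      ring
    rw [hexp]
    nlinarith [h1]
  have abel : ∀ n, 1 ≤ n → n ≤ K →
      D n * (μ n + 1 / δ n)
        ≤ ∑ k ∈ Finset.Icc 1 n, (D k - D (k - 1)) * (μ k + 1 / δ k) := by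
    intro n hn
    induction n, hn using Nat.le_induction with
    | base =>
      intro h1K
      simp only [Finset.Icc_self, Finset.sum_singleton]
      norm_num [hD0]
    | succ n hn ih =>
      intro hnK
      have hnK' : n ≤ K := by omega
      have ihh := ih hnK'
      rw [Finset.sum_Icc_succ_top (by omega : 1 ≤ n + 1)]
      have hDn : D n ≤ 0 := hDle n hn hnK'
      have hkey2 : 0 ≤ (-D n) * ((μ (n+1) + 1 / δ (n+1)) - (μ n + 1 / δ n)) := by
        rcases eq_or_lt_of_le hDn with heq | hlt
        · rw [heq]; simp
        · have hδeq : δ (n + 1) = δ n := hkey n hn (by omega) hlt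
          have heps : (μ (n+1) + 1 / δ (n+1)) - (μ n + 1 / δ n) = μ (n+1) - μ n := by
            rw [hδeq]; ring
          rw [heps]
          exact mul_nonneg (by linarith) (by linarith [hμmono n hn (by omega)])
      have hsimp : (n + 1 : ℕ) - 1 = n := by omega
      rw [hsimp]
      nlinarith [ihh, hkey2]
  have habel := abel K hK le_rfl
  rw [hDK, zero_mul] at habel
  have hsum1 := Finset.sum_le_sum perterm
  rw [Finset.sum_add_distrib] at hsum1
  linarith

/-- Greatest convex minorant / PAVA characterization of the isotonic
problem with `Φ(μ) = -log(-μ)`: with `S k = s₁ + ⋯ + s_k` (all `s k > 0`) and `Sbar`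
the greatest convex minorant on `[0, K]` of the points `(k, S k)`, the increments
`Sbar k - Sbar (k-1)` are positive and `μ̂ k = -1/(Sbar k - Sbar (k-1))` minimizes
`∑_{k=1}^K (-log (-μ k) - μ k * s k)` over `μ₁ ≤ ⋯ ≤ μ_K < 0`. -/
theorem stmt_3 (K : ℕ) (hK : 1 ≤ K) (s : ℕ → ℝ) (hs : ∀ k, 1 ≤ k → k ≤ K → 0 < s k)
    (S : ℕ → ℝ) (hS : ∀ k, S k = ∑ i ∈ Finset.Icc 1 k, s i)
    (Sbar : ℝ → ℝ)
    (hconv : ConvexOn ℝ (Set.Icc (0 : ℝ) (K : ℝ)) Sbar)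
    (hbelow : ∀ k : ℕ, k ≤ K → Sbar (k : ℝ) ≤ S k)
    (hgreatest : ∀ g : ℝ → ℝ, ConvexOn ℝ (Set.Icc (0 : ℝ) (K : ℝ)) g →
      (∀ k : ℕ, k ≤ K → g (k : ℝ) ≤ S k) → ∀ x ∈ Set.Icc (0 : ℝ) (K : ℝ), g x ≤ Sbar x) :
    (∀ k : ℕ, 1 ≤ k → k ≤ K → 0 < Sbar (k : ℝ) - Sbar ((k : ℝ) - 1)) ∧
    (∀ k : ℕ, 1 ≤ k → k < K →
      -(1 / (Sbar (k : ℝ) - Sbar ((k : ℝ) - 1)))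
        ≤ -(1 / (Sbar ((k + 1 : ℕ) : ℝ) - Sbar (((k + 1 : ℕ) : ℝ) - 1)))) ∧
    (∀ k : ℕ, 1 ≤ k → k ≤ K → -(1 / (Sbar (k : ℝ) - Sbar ((k : ℝ) - 1))) < 0) ∧
    ∀ μ : ℕ → ℝ, (∀ k, 1 ≤ k → k < K → μ k ≤ μ (k + 1)) →
      (∀ k, 1 ≤ k → k ≤ K → μ k < 0) →
      ∑ k ∈ Finset.Icc 1 K,
          (-Real.log (-(-(1 / (Sbar (k : ℝ) - Sbar ((k : ℝ) - 1)))))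
            - (-(1 / (Sbar (k : ℝ) - Sbar ((k : ℝ) - 1)))) * s k)
        ≤ ∑ k ∈ Finset.Icc 1 K, (-Real.log (-μ k) - μ k * s k) := by
  have hS0 : S 0 = 0 := by rw [hS]; simp
  have hstep : ∀ k : ℕ, 1 ≤ k → S k = S (k - 1) + s k := by
    intro k hk
    obtain ⟨n, rfl⟩ : ∃ n, k = n + 1 := ⟨k - 1, by omega⟩
    rw [hS, hS]
    simp only [Nat.add_sub_cancel]
    exact Finset.sum_Icc_succ_top (by omega) s
  have hSnn : ∀ k : ℕ, k ≤ K → 0 ≤ S k := by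
    intro k hk
    rw [hS]
    refine Finset.sum_nonneg fun i hi => ?_
    rw [Finset.mem_Icc] at hi
    exact (hs i hi.1 (le_trans hi.2 hk)).le
  have hne : (Finset.Icc 1 K).Nonempty := Finset.nonempty_Icc.mpr hK
  set m : ℝ := (Finset.Icc 1 K).inf' hne s with hm_def
  have hm : 0 < m := by
    rw [hm_def, Finset.lt_inf'_iff]
    intro i hi
    rw [Finset.mem_Icc] at hi
    exact hs i hi.1 hi.2
  have hmS : ∀ k : ℕ, 1 ≤ k → k ≤ K → m * k ≤ S k := by
    intro k hk1 hkK
    rw [hS]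
    calc m * k = ∑ _i ∈ Finset.Icc 1 k, m := by
          rw [Finset.sum_const, Nat.card_Icc, nsmul_eq_mul]
          simp [mul_comm]
      _ ≤ ∑ i ∈ Finset.Icc 1 k, s i := by
          refine Finset.sum_le_sum fun i hi => ?_
          rw [Finset.mem_Icc] at hi
          exact Finset.inf'_le s (Finset.mem_Icc.mpr ⟨hi.1, le_trans hi.2 hkK⟩)
  have Sbar0 : Sbar 0 = 0 := by
    have h1 : Sbar ((0 : ℕ) : ℝ) ≤ S 0 := hbelow 0 (Nat.zero_le K)
    have h2 : (0 : ℝ) ≤ Sbar 0 := by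
      have := hgreatest (fun _ => (0 : ℝ)) (convexOn_const 0 (convex_Icc _ _))
        (fun k hk => hSnn k hk) 0 ⟨le_rfl, Nat.cast_nonneg K⟩
      simpa using this
    rw [Nat.cast_zero, hS0] at h1
    linarith
  have hline : ∀ x ∈ Set.Icc (0 : ℝ) (K : ℝ), m * x + 0 ≤ Sbar x := by
    refine hgreatest _ (stmt3_affine_convexOn _ (convex_Icc _ _) m 0) ?_
    intro k hk
    rcases Nat.eq_zero_or_pos k with rfl | hk1
    · simp [hS0]
    · have := hmS k hk1 hk; linarith
  have inc_mono : ∀ j : ℕ, 1 ≤ j → j < K →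
      Sbar (j : ℝ) - Sbar ((j : ℝ) - 1) ≤ Sbar ((j : ℝ) + 1) - Sbar (j : ℝ) := by
    intro j hj1 hjK
    have hj1R : (1 : ℝ) ≤ (j : ℝ) := by exact_mod_cast hj1
    have hjKR : (j : ℝ) + 1 ≤ (K : ℝ) := by
      have : j + 1 ≤ K := hjK
      exact_mod_cast this
    have h := hconv.slope_mono_adjacent
      (show (j : ℝ) - 1 ∈ Set.Icc (0 : ℝ) (K : ℝ) from ⟨by linarith, by linarith⟩)
      (show (j : ℝ) + 1 ∈ Set.Icc (0 : ℝ) (K : ℝ) from ⟨by linarith, by linarith⟩)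
      (show (j : ℝ) - 1 < (j : ℝ) by linarith) (show (j : ℝ) < (j : ℝ) + 1 by linarith)
    rw [show (j : ℝ) - ((j : ℝ) - 1) = 1 by ring, show (j : ℝ) + 1 - (j : ℝ) = 1 by ring,
      div_one, div_one] at h
    linarith
  have inc_pos : ∀ k : ℕ, 1 ≤ k → k ≤ K → m ≤ Sbar (k : ℝ) - Sbar ((k : ℝ) - 1) := by
    intro k hk
    induction k, hk using Nat.le_induction with
    | base =>
      intro h1K
      have h1 := hline 1 ⟨by norm_num, by exact_mod_cast h1K⟩
      rw [Nat.cast_one, show (1 : ℝ) - 1 = 0 by ring, Sbar0]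
      linarith
    | succ n hn ih =>
      intro hnK
      have h1 := ih (by omega)
      have h2 := inc_mono n hn (by omega)
      have hc : ((n + 1 : ℕ) : ℝ) = (n : ℝ) + 1 := by push_cast; ring
      rw [hc, show (n : ℝ) + 1 - 1 = (n : ℝ) by ring]
      linarith
  have SbarK : Sbar (K : ℝ) = S K := by
    have hrne : (Finset.range K).Nonempty := ⟨0, Finset.mem_range.mpr (by omega)⟩
    set M : ℝ := (Finset.range K).sup' hrne (fun n => (S K - S n) / ((K : ℝ) - n)) with hM
    have hge : S K ≤ Sbar (K : ℝ) := by
      have := hgreatest (fun x => M * x + (S K - M * K))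
        (stmt3_affine_convexOn _ (convex_Icc _ _) M (S K - M * K)) ?_ (K : ℝ)
        ⟨Nat.cast_nonneg K, le_rfl⟩
      · linarith
      · intro n hn
        rcases eq_or_lt_of_le hn with rfl | hlt
        · linarith
        · have hmem : n ∈ Finset.range K := Finset.mem_range.mpr hlt
          have hle := Finset.le_sup' (fun n => (S K - S n) / ((K : ℝ) - n)) hmem
          rw [← hM] at hle
          have hd : (0 : ℝ) < (K : ℝ) - n := by
            have : (n : ℝ) < (K : ℝ) := by exact_mod_cast hlt
            linarith
          rw [div_le_iff₀ hd] at hle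
          nlinarith
    linarith [hbelow K le_rfl]
  refine ⟨fun k hk1 hkK => lt_of_lt_of_le hm (inc_pos k hk1 hkK), ?_, ?_, ?_⟩
  · intro k hk1 hkK
    have h1 : 0 < Sbar (k : ℝ) - Sbar ((k : ℝ) - 1) := lt_of_lt_of_le hm (inc_pos k hk1 hkK.le)
    have h2 := inc_mono k hk1 hkK
    have hc : ((k + 1 : ℕ) : ℝ) = (k : ℝ) + 1 := by push_cast; ring
    rw [hc, show (k : ℝ) + 1 - 1 = (k : ℝ) by ring]
    exact neg_le_neg (one_div_le_one_div_of_le h1 h2)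
  · intro k hk1 hkK
    have h1 : 0 < Sbar (k : ℝ) - Sbar ((k : ℝ) - 1) := lt_of_lt_of_le hm (inc_pos k hk1 hkK)
    simpa using one_div_pos.mpr h1
  · intro μ hmono hneg
    refine stmt3_aux K hK s (fun k => Sbar (k : ℝ) - Sbar ((k : ℝ) - 1)) μ
      (fun k => Sbar (k : ℝ) - S k) ?_ ?_ ?_ ?_ ?_ ?_ hmono hneg
    · exact fun k hk1 hkK => lt_of_lt_of_le hm (inc_pos k hk1 hkK)
    · intro k hk1 hkK
      have hcast : ((k - 1 : ℕ) : ℝ) = (k : ℝ) - 1 := by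
        have := Nat.cast_sub (R := ℝ) hk1
        simpa using this
      rw [hcast, hstep k hk1]
      ring
    · simp only [Nat.cast_zero, Sbar0, hS0, sub_zero]
    · simp only [SbarK, sub_self]
    · exact fun k hk1 hkK => sub_nonpos.mpr (hbelow k hkK)
    · intro k hk1 hkK hDneg
      have hkey := stmt3_key K S Sbar hconv hbelow hgreatest k hk1 hkK (by linarith)
      have hc : ((k + 1 : ℕ) : ℝ) = (k : ℝ) + 1 := by push_cast; ring
      rw [hc, show (k : ℝ) + 1 - 1 = (k : ℝ) by ring]
      linarith
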